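/- arXiv:2005.02926 — 2 statements merged into one kernel-verified Lean document; each statement's English description precedes it below -/
import Mathlib

section
/- Let (R, Δ) be an odd form ring with a hyperbolic pair η. Then the transvection map T^η : Δ_η^{|η|'} → U(R, Δ) defined by β(T^η(u)) = ρ(u) + π(u) − conj(π(u)) and γ(T^η(u)) = u ∔ q_{−η}·(ρ(u) − conj(π(u))) ∸ φ(ρ(u) + π(u)) is a well-defined injective group homomorphism. -/
open scoped commutatorElement

/-- An odd form ring `(R, Δ)`: a non-unital ring `R` with involution `conj`,
a group `Δ` with a right action of the multiplicative semigroup `R^•` and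
structure maps `phi : R → Δ`, `pi ρ : Δ → R` satisfying the odd form ring
axioms.  The group operation of `Δ` (written `∔` in the paper) is written
multiplicatively here. -/
structure OddForm (R Δ : Type*) [NonUnitalRing R] [Group Δ] where
  conj : R → R
  conj_add : ∀ a b, conj (a + b) = conj a + conj b
  conj_mul : ∀ a b, conj (a * b) = conj b * conj a
  conj_conj : ∀ a, conj (conj a) = a
  act : Δ → R → Δ
  act_mul : ∀ u v a, act (u * v) a = act u a * act v a
  act_act : ∀ u a b, act (act u a) b = act u (a * b)
  phi : R → Δ
  pi : Δ → R
  rho : Δ → R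
  pi_mul : ∀ u v, pi (u * v) = pi u + pi v
  pi_act : ∀ u a, pi (act u a) = pi u * a
  phi_add : ∀ a b, phi (a + b) = phi a * phi b
  phi_act : ∀ a b, act (phi b) a = phi (conj a * b * a)
  rho_mul : ∀ u v, rho (u * v) = rho u - conj (pi u) * pi v + rho v
  rho_act : ∀ u a, rho (act u a) = conj a * rho u * a
  rho_pi : ∀ u, rho u + conj (rho u) + conj (pi u) * pi u = 0
  pi_phi : ∀ a, pi (phi a) = 0
  rho_phi : ∀ a, rho (phi a) = a - conj a
  comm_phi : ∀ u v, ⁅u, v⁆ = phi (-(conj (pi u) * pi v))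
  phi_symm : ∀ a, conj a = a → phi a = 1
  act_addR : ∀ u a b, act u (a + b) = act u a * phi (conj b * rho u * a) * act u b

namespace OddForm

variable {R Δ : Type*} [NonUnitalRing R] [Group Δ]

/-- The action of `a + 1` (an element of the unitalization `R ⋊ ℤ`) on `Δ`:
`u · (a + 1) = u·a ∔ φ(ρ(u) a) ∔ u`. -/
def actA (o : OddForm R Δ) (u : Δ) (a : R) : Δ :=
  o.act u a * o.phi (o.rho u * a) * u

/-- Membership in the unitary group `U(R, Δ)`: for `g = (β, γ)` with `α = β + 1`,
`α⁻¹ = conj α` (expressed without the unitalization) together with `π(γ) = β` and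
`ρ(γ) = conj β`. -/
def umem (o : OddForm R Δ) (g : R × Δ) : Prop :=
  g.1 * o.conj g.1 + g.1 + o.conj g.1 = 0 ∧
  o.conj g.1 * g.1 + o.conj g.1 + g.1 = 0 ∧
  o.pi g.2 = g.1 ∧ o.rho g.2 = o.conj g.1

/-- The group operation of the unitary group: `α(gg') = α(g) α(g')` and
`γ(gg') = γ(g) · α(g') ∔ γ(g')`. -/
def umul (o : OddForm R Δ) (g h : R × Δ) : R × Δ :=
  (g.1 * h.1 + g.1 + h.1, o.actA g.2 h.1 * h.2)

/-- The identity element of the unitary group. -/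
def uone (o : OddForm R Δ) : R × Δ := ((0 : R), (1 : Δ))

/-- The inverse in the unitary group: `β(g⁻¹) = conj β(g)`,
`γ(g⁻¹) = (γ(g) · conj α(g))⁻¹`. -/
def uinv (o : OddForm R Δ) (g : R × Δ) : R × Δ :=
  (o.conj g.1, (o.actA g.2 (o.conj g.1))⁻¹)

end OddForm

namespace OddForm

variable {R Δ : Type*} [NonUnitalRing R] [Group Δ]

/-- `η = (em, ep, qm, qp)` is a hyperbolic pair: `ep = e_η`, `em = e_{−η}` are
orthogonal idempotents with `em = conj ep`, and `qp = q_η`, `qm = q_{−η}` satisfy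
`π(q_{±η}) = e_{±η}`, `ρ(q_{±η}) = 0`, `q_{±η} = q_{±η}·e_{±η}`. -/
def IsHPair (o : OddForm R Δ) (em ep : R) (qm qp : Δ) : Prop :=
  ep * ep = ep ∧ em * em = em ∧ ep * em = 0 ∧ em * ep = 0 ∧
  o.conj ep = em ∧
  o.pi qp = ep ∧ o.pi qm = em ∧ o.rho qp = 0 ∧ o.rho qm = 0 ∧
  o.act qp ep = qp ∧ o.act qm em = qm

/-- Membership in `Δ_η^{|η|'} = {u ∈ Δ·e_η | e_{|η|} π(u) = 0}`. -/
def Dmem (o : OddForm R Δ) (em ep : R) (u : Δ) : Prop :=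
  o.act u ep = u ∧ (ep + em) * o.pi u = 0

/-- The transvection `T^η(u)`, as an element of `R × Δ`:
`β = ρ(u) + π(u) − conj π(u)`,
`γ = u ∔ q_{−η}·(ρ(u) − conj π(u)) ∸ φ(ρ(u) + π(u))`. -/
def Tv (o : OddForm R Δ) (qm : Δ) (u : Δ) : R × Δ :=
  (o.rho u + o.pi u - o.conj (o.pi u),
   u * o.act qm (o.rho u - o.conj (o.pi u)) * (o.phi (o.rho u + o.pi u))⁻¹)

/-- `a` and `b` are mutually inverse elements of the unital ring
`R_{ηη} = e_η R e_η` (with identity `ep`). -/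
def IsInvPair (ep a b : R) : Prop :=
  a = ep * a * ep ∧ b = ep * b * ep ∧ a * b = ep ∧ b * a = ep

/-- The elementary dilation `D^η(a)` (with `b = a⁻¹` in `R_{ηη}`):
`β = a + conj(a)⁻¹ − e_{|η|}`,
`γ = q_{−η}·(conj(a)⁻¹ − e_{−η}) ∔ q_η·(a − e_η) ∸ φ(a − e_η)`. -/
def Dil (o : OddForm R Δ) (em ep : R) (qm qp : Δ) (a b : R) : R × Δ :=
  (a + o.conj b - (ep + em),
   o.act qm (o.conj b - em) * o.act qp (a - ep) * (o.phi (a - ep))⁻¹)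

/-- Membership in the maximal parabolic subgroup `P_η`. -/
def Pmem (o : OddForm R Δ) (em ep : R) (qm : Δ) (g : R × Δ) : Prop :=
  o.umem g ∧ g.1 * em = em * g.1 * em ∧ ep * g.1 = ep * g.1 * ep ∧
  o.act g.2 em = o.act qm (g.1 * em)

/-- Membership in the smaller unitary group `U_{|η|'}`. -/
def Uprime (o : OddForm R Δ) (em ep : R) (g : R × Δ) : Prop :=
  o.umem g ∧ g.1 * (ep + em) = 0 ∧ (ep + em) * g.1 = 0 ∧ o.act g.2 (ep + em) = 1

end OddForm


namespace OddForm

variable {R Δ : Type*} [NonUnitalRing R] [Group Δ]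

lemma conj_zero' (o : OddForm R Δ) : o.conj 0 = 0 := by
  have h := o.conj_add 0 0
  rw [add_zero] at h
  exact left_eq_add.mp h

lemma conj_neg' (o : OddForm R Δ) (a : R) : o.conj (-a) = -o.conj a := by
  have h := o.conj_add a (-a)
  rw [add_neg_cancel, o.conj_zero'] at h
  exact (neg_eq_of_add_eq_zero_right h.symm).symm

lemma conj_sub' (o : OddForm R Δ) (a b : R) : o.conj (a - b) = o.conj a - o.conj b := by
  rw [sub_eq_add_neg, o.conj_add, o.conj_neg', ← sub_eq_add_neg]

lemma phi_zero' (o : OddForm R Δ) : o.phi 0 = 1 := by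
  have h := o.phi_add 0 0
  rw [add_zero] at h
  exact left_eq_mul.mp h

lemma phi_mul_phi (o : OddForm R Δ) (a b : R) : o.phi a * o.phi b = o.phi (a + b) :=
  (o.phi_add a b).symm

lemma phi_inv' (o : OddForm R Δ) (a : R) : (o.phi a)⁻¹ = o.phi (-a) := by
  have h : o.phi a * o.phi (-a) = 1 := by
    rw [o.phi_mul_phi, add_neg_cancel, o.phi_zero']
  exact inv_eq_of_mul_eq_one_right h

lemma phi_comm' (o : OddForm R Δ) (a : R) (x : Δ) : o.phi a * x = x * o.phi a := by
  have h := o.comm_phi (o.phi a) x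
  rw [o.pi_phi, o.conj_zero', zero_mul, neg_zero, o.phi_zero'] at h
  exact commutatorElement_eq_one_iff_mul_comm.mp h

lemma commute_of_pi' (o : OddForm R Δ) (x y : Δ) (h : o.conj (o.pi x) * o.pi y = 0) :
    x * y = y * x := by
  have h2 := o.comm_phi x y
  rw [h, neg_zero, o.phi_zero'] at h2
  exact commutatorElement_eq_one_iff_mul_comm.mp h2

lemma act_zero' (o : OddForm R Δ) (u : Δ) : o.act u 0 = 1 := by
  have h := o.act_addR u 0 0
  rw [add_zero, mul_zero, o.phi_zero', mul_one] at h
  exact (left_eq_mul.mp h)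

lemma act_one' (o : OddForm R Δ) (a : R) : o.act 1 a = 1 := by
  have h := o.act_mul 1 1 a
  rw [one_mul] at h
  exact left_eq_mul.mp h

lemma act_inv' (o : OddForm R Δ) (x : Δ) (a : R) : o.act x⁻¹ a = (o.act x a)⁻¹ := by
  have h := o.act_mul x⁻¹ x a
  rw [inv_mul_cancel, o.act_one'] at h
  exact eq_inv_of_mul_eq_one_left h.symm

lemma pi_one' (o : OddForm R Δ) : o.pi 1 = 0 := by
  have h := o.pi_mul 1 1
  rw [one_mul] at h
  exact left_eq_add.mp h

lemma act_add_zero' (o : OddForm R Δ) {q : Δ} (hq : o.rho q = 0) (a b : R) :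
    o.act q (a + b) = o.act q a * o.act q b := by
  have h := o.act_addR q a b
  rw [hq, mul_zero, zero_mul, o.phi_zero', mul_one] at h
  exact h

end OddForm


open OddForm in
/-- Let `(R, Δ)` be an odd form ring with a hyperbolic pair `η`.  Then
`T^η : Δ_η^{|η|'} → U(R, Δ)` is a well-defined injective group homomorphism. -/
theorem transvection_injective_hom {R Δ : Type*} [NonUnitalRing R] [Group Δ]
    (o : OddForm R Δ) (em ep : R) (qm qp : Δ) (hη : IsHPair o em ep qm qp) :
    (∀ u : Δ, Dmem o em ep u → o.umem (Tv o qm u)) ∧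
    (∀ u v : Δ, Dmem o em ep u → Dmem o em ep v →
      Tv o qm (u * v) = o.umul (Tv o qm u) (Tv o qm v)) ∧
    (∀ u v : Δ, Dmem o em ep u → Dmem o em ep v →
      Tv o qm u = Tv o qm v → u = v) := by
  obtain ⟨hepep, hemem, hepem, hemep, hcep, hpiqp, hpiqm, hrqp, hrqm, hactqp, hactqm⟩ := hη
  have hcem : o.conj em = ep := by rw [← hcep, o.conj_conj]
  -- per-element basic facts
  have Bpep : ∀ x, o.Dmem em ep x → o.pi x * ep = o.pi x := by
    intro x hx
    have h := o.pi_act x ep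
    rw [hx.1] at h
    exact h.symm
  have Brho : ∀ x, o.Dmem em ep x → em * o.rho x * ep = o.rho x := by
    intro x hx
    have h := o.rho_act x ep
    rw [hx.1, hcep] at h
    exact h.symm
  have Brep : ∀ x, o.Dmem em ep x → o.rho x * ep = o.rho x := by
    intro x hx
    calc o.rho x * ep = em * o.rho x * ep * ep := by rw [Brho x hx]
      _ = em * o.rho x * (ep * ep) := by rw [mul_assoc]
      _ = o.rho x := by rw [hepep, Brho x hx]
  have Bemr : ∀ x, o.Dmem em ep x → em * o.rho x = o.rho x := by
    intro x hx
    calc em * o.rho x = em * (em * o.rho x * ep) := by rw [Brho x hx]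
      _ = em * em * o.rho x * ep := by rw [← mul_assoc, ← mul_assoc]
      _ = o.rho x := by rw [hemem, Brho x hx]
  have Bepr : ∀ x, o.Dmem em ep x → ep * o.rho x = 0 := by
    intro x hx
    calc ep * o.rho x = ep * (em * o.rho x * ep) := by rw [Brho x hx]
      _ = ep * em * o.rho x * ep := by rw [← mul_assoc, ← mul_assoc]
      _ = 0 := by rw [hepem, zero_mul, zero_mul]
  have Brem : ∀ x, o.Dmem em ep x → o.rho x * em = 0 := by
    intro x hx
    calc o.rho x * em = em * o.rho x * ep * em := by rw [Brho x hx]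
      _ = em * o.rho x * (ep * em) := by rw [mul_assoc]
      _ = 0 := by rw [hepem, mul_zero]
  have Bcp : ∀ x, o.Dmem em ep x → em * o.conj (o.pi x) = o.conj (o.pi x) := by
    intro x hx
    conv_rhs => rw [← Bpep x hx, o.conj_mul, hcep]
  have Bepcp : ∀ x, o.Dmem em ep x → ep * o.conj (o.pi x) = 0 := by
    intro x hx
    rw [← Bcp x hx, ← mul_assoc, hepem, zero_mul]
  have Bepp : ∀ x, o.Dmem em ep x → ep * o.pi x = -(em * o.pi x) := by
    intro x hx
    have h := hx.2
    rw [add_mul] at h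
    exact eq_neg_of_add_eq_zero_left h
  have Bcpe : ∀ x, o.Dmem em ep x → o.conj (o.pi x) * em = -(o.conj (o.pi x) * ep) := by
    intro x hx
    have h := congrArg o.conj hx.2
    rw [o.conj_mul, o.conj_add, hcep, hcem, o.conj_zero', mul_add] at h
    exact eq_neg_of_add_eq_zero_left h
  have Bpem : ∀ x, o.Dmem em ep x → o.pi x * em = 0 := by
    intro x hx
    rw [← Bpep x hx, mul_assoc, hepem, mul_zero]
  have Bcr : ∀ x, o.Dmem em ep x →
      o.conj (o.rho x) = -(o.rho x + o.conj (o.pi x) * o.pi x) := by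
    intro x hx
    have h := o.rho_pi x
    have h2 : o.conj (o.rho x) + (o.rho x + o.conj (o.pi x) * o.pi x) = 0 := by
      rw [← h]; abel
    exact eq_neg_of_add_eq_zero_left h2
  -- pairwise zero products
  have Zrr : ∀ x y, o.Dmem em ep x → o.Dmem em ep y → o.rho x * o.rho y = 0 := by
    intro x y hx hy
    rw [← Bemr y hy, ← mul_assoc, Brem x hx, zero_mul]
  have Zrp : ∀ x y, o.Dmem em ep x → o.Dmem em ep y → o.rho x * o.pi y = 0 := by
    intro x y hx hy
    rw [← Brep x hx, mul_assoc, Bepp y hy, mul_neg, ← mul_assoc, Brem x hx, zero_mul, neg_zero]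
  have Zrcp : ∀ x y, o.Dmem em ep x → o.Dmem em ep y → o.rho x * o.conj (o.pi y) = 0 := by
    intro x y hx hy
    rw [← Bcp y hy, ← mul_assoc, Brem x hx, zero_mul]
  have Zpr : ∀ x y, o.Dmem em ep x → o.Dmem em ep y → o.pi x * o.rho y = 0 := by
    intro x y hx hy
    rw [← Bemr y hy, ← mul_assoc, Bpem x hx, zero_mul]
  have Zpp : ∀ x y, o.Dmem em ep x → o.Dmem em ep y → o.pi x * o.pi y = 0 := by
    intro x y hx hy
    rw [← Bpep x hx, mul_assoc, Bepp y hy, mul_neg, ← mul_assoc, Bpem x hx, zero_mul, neg_zero]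
  have Zpcp : ∀ x y, o.Dmem em ep x → o.Dmem em ep y → o.pi x * o.conj (o.pi y) = 0 := by
    intro x y hx hy
    rw [← Bcp y hy, ← mul_assoc, Bpem x hx, zero_mul]
  have Zcpr : ∀ x y, o.Dmem em ep x → o.Dmem em ep y → o.conj (o.pi x) * o.rho y = 0 := by
    intro x y hx hy
    rw [← Bemr y hy, ← mul_assoc, Bcpe x hx, neg_mul, mul_assoc, Bepr y hy, mul_zero, neg_zero]
  have Zcpcp : ∀ x y, o.Dmem em ep x → o.Dmem em ep y →
      o.conj (o.pi x) * o.conj (o.pi y) = 0 := by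
    intro x y hx hy
    rw [← Bcp y hy, ← mul_assoc, Bcpe x hx, neg_mul, mul_assoc, Bepcp y hy, mul_zero, neg_zero]
  -- compound products
  have hbb : ∀ x y, o.Dmem em ep x → o.Dmem em ep y →
      (o.rho x + o.pi x - o.conj (o.pi x)) * (o.rho y + o.pi y - o.conj (o.pi y))
        = -(o.conj (o.pi x) * o.pi y) := by
    intro x y hx hy
    simp only [sub_mul, add_mul, mul_sub, mul_add, Zrr x y hx hy, Zrp x y hx hy,
      Zrcp x y hx hy, Zpr x y hx hy, Zpp x y hx hy, Zpcp x y hx hy, Zcpr x y hx hy,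
      Zcpcp x y hx hy]
    abel
  have hb0 : ∀ x y, o.Dmem em ep x → o.Dmem em ep y →
      (o.rho x + o.pi x) * (o.rho y + o.pi y - o.conj (o.pi y)) = 0 := by
    intro x y hx hy
    simp only [add_mul, mul_sub, mul_add, Zrr x y hx hy, Zrp x y hx hy,
      Zrcp x y hx hy, Zpr x y hx hy, Zpp x y hx hy, Zpcp x y hx hy]
    abel
  have hcbb : ∀ x y, o.Dmem em ep x → o.Dmem em ep y →
      o.conj (o.rho x + o.pi x - o.conj (o.pi x)) *
        (o.rho y + o.pi y - o.conj (o.pi y)) = o.conj (o.pi x) * o.pi y := by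
    intro x y hx hy
    rw [o.conj_sub', o.conj_add, o.conj_conj, Bcr x hx]
    simp only [sub_mul, add_mul, neg_mul, mul_sub, mul_add, mul_assoc,
      Zrr x y hx hy, Zrp x y hx hy, Zrcp x y hx hy, Zpr x y hx hy, Zpp x y hx hy,
      Zpcp x y hx hy, Zcpr x y hx hy, Zcpcp x y hx hy, mul_zero, zero_mul]
    abel
  -- Part 1 : well-definedness (membership in the unitary group)
  have mem1 : ∀ x, Dmem o em ep x → o.umem (Tv o qm x) := by
    intro x hx
    refine ⟨?_, ?_, ?_, ?_⟩
    · show (o.rho x + o.pi x - o.conj (o.pi x)) * o.conj (o.rho x + o.pi x - o.conj (o.pi x))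
        + (o.rho x + o.pi x - o.conj (o.pi x)) + o.conj (o.rho x + o.pi x - o.conj (o.pi x)) = 0
      have Y1 : o.rho x * (o.conj (o.pi x) * o.pi x) = 0 := by
        rw [← mul_assoc, Zrcp x x hx hx, zero_mul]
      have Y2 : o.pi x * (o.conj (o.pi x) * o.pi x) = 0 := by
        rw [← mul_assoc, Zpcp x x hx hx, zero_mul]
      have Y3 : o.conj (o.pi x) * (o.conj (o.pi x) * o.pi x) = 0 := by
        rw [← mul_assoc, Zcpcp x x hx hx, zero_mul]
      rw [o.conj_sub', o.conj_add, o.conj_conj, Bcr x hx]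
      simp only [sub_mul, add_mul, neg_mul, mul_sub, mul_add, mul_neg, mul_assoc, Y1, Y2, Y3,
        Zrr x x hx hx, Zrp x x hx hx, Zrcp x x hx hx, Zpr x x hx hx, Zpp x x hx hx,
        Zpcp x x hx hx, Zcpr x x hx hx, Zcpcp x x hx hx, mul_zero, zero_mul]
      abel
    · show o.conj (o.rho x + o.pi x - o.conj (o.pi x)) * (o.rho x + o.pi x - o.conj (o.pi x))
        + o.conj (o.rho x + o.pi x - o.conj (o.pi x)) + (o.rho x + o.pi x - o.conj (o.pi x)) = 0
      rw [hcbb x x hx hx, o.conj_sub', o.conj_add, o.conj_conj, Bcr x hx]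
      abel
    · show o.pi (x * o.act qm (o.rho x - o.conj (o.pi x)) * (o.phi (o.rho x + o.pi x))⁻¹)
        = o.rho x + o.pi x - o.conj (o.pi x)
      rw [o.phi_inv', o.pi_mul, o.pi_mul, o.pi_act, hpiqm, o.pi_phi, add_zero,
        mul_sub, Bemr x hx, Bcp x hx]
      abel
    · show o.rho (x * o.act qm (o.rho x - o.conj (o.pi x)) * (o.phi (o.rho x + o.pi x))⁻¹)
        = o.conj (o.rho x + o.pi x - o.conj (o.pi x))
      rw [o.phi_inv', o.rho_mul, o.pi_phi, mul_zero, sub_zero, o.rho_phi, o.conj_neg',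
        sub_neg_eq_add, o.conj_add, o.rho_mul, o.rho_act, hrqm, mul_zero, zero_mul,
        o.pi_act, hpiqm, mul_sub em, Bemr x hx, Bcp x hx,
        mul_sub (o.conj (o.pi x)), Zcpr x x hx hx, Zcpcp x x hx hx,
        o.conj_sub', o.conj_add, o.conj_conj]
      abel
  refine ⟨mem1, ?_, ?_⟩
  · -- Part 2 : homomorphism
    intro u v hu hv
    rw [Prod.ext_iff]
    constructor
    · show o.rho (u * v) + o.pi (u * v) - o.conj (o.pi (u * v))
        = (o.rho u + o.pi u - o.conj (o.pi u)) * (o.rho v + o.pi v - o.conj (o.pi v)) + (o.rho u + o.pi u - o.conj (o.pi u)) + (o.rho v + o.pi v - o.conj (o.pi v))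
      rw [o.rho_mul, o.pi_mul, o.conj_add, hbb u v hu hv]
      abel
    · show u * v * o.act qm (o.rho (u * v) - o.conj (o.pi (u * v)))
          * (o.phi (o.rho (u * v) + o.pi (u * v)))⁻¹
        = o.act (u * o.act qm (o.rho u - o.conj (o.pi u)) * (o.phi (o.rho u + o.pi u))⁻¹) (o.rho v + o.pi v - o.conj (o.pi v)) * o.phi (o.rho (u * o.act qm (o.rho u - o.conj (o.pi u)) * (o.phi (o.rho u + o.pi u))⁻¹) * (o.rho v + o.pi v - o.conj (o.pi v))) * (u * o.act qm (o.rho u - o.conj (o.pi u)) * (o.phi (o.rho u + o.pi u))⁻¹) * (v * o.act qm (o.rho v - o.conj (o.pi v)) * (o.phi (o.rho v + o.pi v))⁻¹)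
      -- compute act γ1 β2
      have hactuβ : o.act u (o.rho v + o.pi v - o.conj (o.pi v)) = 1 := by
        have e1 := o.act_act u ep (o.rho v + o.pi v - o.conj (o.pi v))
        rw [hu.1] at e1
        have e2 : ep * (o.rho v + o.pi v - o.conj (o.pi v)) = em * (-(o.pi v)) := by
          rw [mul_sub, mul_add, Bepr v hv, Bepcp v hv, Bepp v hv, mul_neg]
          abel
        have e3 : o.act u em = 1 := by
          have h3 := o.act_act u ep em
          rw [hu.1, hepem, o.act_zero'] at h3
          exact h3
        have e4 := o.act_act u em (-(o.pi v))
        rw [e3, o.act_one'] at e4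
        rw [e1, e2, ← e4]
      have hactγβ : o.act (u * o.act qm (o.rho u - o.conj (o.pi u)) * (o.phi (o.rho u + o.pi u))⁻¹) (o.rho v + o.pi v - o.conj (o.pi v)) = o.act qm (-(o.conj (o.pi u) * o.pi v)) := by
        rw [o.act_mul, o.act_mul, hactuβ, one_mul, o.act_act, o.act_inv', o.phi_act]
        have z1 : (o.rho u - o.conj (o.pi u)) * (o.rho v + o.pi v - o.conj (o.pi v)) = -(o.conj (o.pi u) * o.pi v) := by
          simp only [sub_mul, mul_sub, mul_add, Zrr u v hu hv, Zrp u v hu hv,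
            Zrcp u v hu hv, Zcpr u v hu hv, Zcpcp u v hu hv]
          abel
        rw [z1, mul_assoc (o.conj (o.rho v + o.pi v - o.conj (o.pi v))), hb0 u v hu hv, mul_zero, o.phi_zero',
          inv_one, mul_one]
      have hγrho : o.rho (u * o.act qm (o.rho u - o.conj (o.pi u)) * (o.phi (o.rho u + o.pi u))⁻¹) = o.conj (o.rho u + o.pi u - o.conj (o.pi u)) := (mem1 u hu).2.2.2
      rw [hactγβ, hγrho, hcbb u v hu hv, o.rho_mul, o.pi_mul, o.conj_add]
      simp only [o.phi_inv']
      simp only [mul_assoc]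
      -- commutation facts
      have hsw : ∀ x y : Δ, x * y = y * x → ∀ t : Δ, x * (y * t) = y * (x * t) := by
        intro x y h t
        rw [← mul_assoc, h, mul_assoc]
      have hme : ∀ x y z : Δ, x * y = z → ∀ t : Δ, x * (y * t) = z * t := by
        intro x y z h t
        rw [← mul_assoc, h]
      have hswPh : ∀ (a : R) (x : Δ), ∀ t : Δ, o.phi a * (x * t) = x * (o.phi a * t) := by
        intro a x t
        rw [← mul_assoc, o.phi_comm', mul_assoc]
      have hW0u : (o.act qm (-(o.conj (o.pi u) * o.pi v))) * u = u * (o.act qm (-(o.conj (o.pi u) * o.pi v))) := by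
        apply o.commute_of_pi'
        rw [o.pi_act, hpiqm, mul_neg, ← mul_assoc, Bcp u hu, o.conj_neg', o.conj_mul,
          o.conj_conj, neg_mul, mul_assoc, Zpp u u hu hu, mul_zero, neg_zero]
      have hW0v : (o.act qm (-(o.conj (o.pi u) * o.pi v))) * v = v * (o.act qm (-(o.conj (o.pi u) * o.pi v))) := by
        apply o.commute_of_pi'
        rw [o.pi_act, hpiqm, mul_neg, ← mul_assoc, Bcp u hu, o.conj_neg', o.conj_mul,
          o.conj_conj, neg_mul, mul_assoc, Zpp u v hu hv, mul_zero, neg_zero]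
      have hW1v : (o.act qm (o.rho u - o.conj (o.pi u))) * v = v * (o.act qm (o.rho u - o.conj (o.pi u))) := by
        apply o.commute_of_pi'
        rw [o.pi_act, hpiqm, mul_sub em, Bemr u hu, Bcp u hu, o.conj_sub', o.conj_conj,
          Bcr u hu, sub_mul, neg_mul, add_mul, mul_assoc, Zpp u v hu hv, mul_zero,
          add_zero, Zrp u v hu hv, neg_zero, sub_zero]
      -- now rearrange the right hand side
      rw [hswPh (o.conj (o.pi u) * o.pi v) u, hswPh (o.conj (o.pi u) * o.pi v) (o.act qm (o.rho u - o.conj (o.pi u))),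
        hme _ _ _ (o.phi_mul_phi (o.conj (o.pi u) * o.pi v) (-(o.rho u + o.pi u))),
        hswPh (o.conj (o.pi u) * o.pi v + -(o.rho u + o.pi u)) v,
        hswPh (o.conj (o.pi u) * o.pi v + -(o.rho u + o.pi u)) (o.act qm (o.rho v - o.conj (o.pi v))),
        o.phi_mul_phi,
        hsw _ _ hW1v,
        hme _ _ _ (o.act_add_zero' hrqm (o.rho u - o.conj (o.pi u)) (o.rho v - o.conj (o.pi v))).symm,
        hsw _ _ hW0u, hsw _ _ hW0v,
        hme _ _ _ (o.act_add_zero' hrqm (-(o.conj (o.pi u) * o.pi v))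
          ((o.rho u - o.conj (o.pi u)) + (o.rho v - o.conj (o.pi v)))).symm]
      rw [show -(o.conj (o.pi u) * o.pi v) + ((o.rho u - o.conj (o.pi u)) + (o.rho v - o.conj (o.pi v)))
          = o.rho u - o.conj (o.pi u) * o.pi v + o.rho v - (o.conj (o.pi u) + o.conj (o.pi v)) from by abel,
        show o.conj (o.pi u) * o.pi v + -(o.rho u + o.pi u) + -(o.rho v + o.pi v)
          = -(o.rho u - o.conj (o.pi u) * o.pi v + o.rho v + (o.pi u + o.pi v)) from by abel]
  · -- Part 3 : injectivity
    intro u v hu hv h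
    have h1 := congrArg Prod.fst h
    have h2 := congrArg Prod.snd h
    simp only [Tv] at h1 h2
    have k1 : ∀ x, o.Dmem em ep x → (ep + em) * (o.rho x + o.pi x - o.conj (o.pi x))
        = o.rho x - o.conj (o.pi x) := by
      intro x hx
      simp only [mul_sub, mul_add, add_mul, Bepr x hx, Bemr x hx, Bepcp x hx,
        Bcp x hx, Bepp x hx]
      abel
    have hp : o.pi u = o.pi v := by
      have e : (o.rho u + o.pi u - o.conj (o.pi u)) - (ep + em) * (o.rho u + o.pi u - o.conj (o.pi u)) = (o.rho v + o.pi v - o.conj (o.pi v)) - (ep + em) * (o.rho v + o.pi v - o.conj (o.pi v)) := by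
        rw [h1]
      rw [k1 u hu, k1 v hv] at e
      calc o.pi u = (o.rho u + o.pi u - o.conj (o.pi u)) - (o.rho u - o.conj (o.pi u)) := by abel
        _ = (o.rho v + o.pi v - o.conj (o.pi v)) - (o.rho v - o.conj (o.pi v)) := e
        _ = o.pi v := by abel
    have hcp : o.conj (o.pi u) = o.conj (o.pi v) := by rw [hp]
    have hr : o.rho u = o.rho v := by
      rw [hp] at h1
      calc o.rho u = (o.rho u + o.pi v - o.conj (o.pi v)) + o.conj (o.pi v) - o.pi v := by abel
        _ = (o.rho v + o.pi v - o.conj (o.pi v)) + o.conj (o.pi v) - o.pi v := by rw [h1]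
        _ = o.rho v := by abel
    rw [← hp, ← hr] at h2
    exact mul_right_cancel (mul_right_cancel h2)
end

section
/- Let η and η̃ be orthogonal hyperbolic pairs in an odd form ring (R, Δ). For a ∈ R_{η̃η} = e_{η̃} R e_η, the transvection T^η(q_{η̃}·a) satisfies β(T^η(q_{η̃}·a)) = a − ā and γ(T^η(q_{η̃}·a)) = q_{η̃}·a ∸ q_{−η}·ā ∸ φ(a), and moreover T^η(q_{η̃}·a) = T^{−η̃}(q_{−η}·(−ā)). -/
open scoped commutatorElement

open OddForm in
/-- Let `η` and `η̃` be orthogonal hyperbolic pairs in an odd form ring `(R, Δ)`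
and `a ∈ R_{η̃η} = e_{η̃} R e_η`.  Then
`β(T^η(q_{η̃}·a)) = a − ā`,
`γ(T^η(q_{η̃}·a)) = q_{η̃}·a ∸ q_{−η}·ā ∸ φ(a)`, and
`T^η(q_{η̃}·a) = T^{−η̃}(q_{−η}·(−ā))` (the transvection for the pair `−η̃`,
whose associated element `q_{−(−η̃)}` is `q_{η̃}`). -/
theorem special_transvections {R Δ : Type*} [NonUnitalRing R] [Group Δ]
    (o : OddForm R Δ) (em ep : R) (qm qp : Δ) (hη : IsHPair o em ep qm qp)
    (em' ep' : R) (qm' qp' : Δ) (hη' : IsHPair o em' ep' qm' qp')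
    (horth : (ep + em) * (ep' + em') = 0 ∧ (ep' + em') * (ep + em) = 0)
    (a : R) (ha : a = ep' * a * ep) :
    (Tv o qm (o.act qp' a)).1 = a - o.conj a ∧
    (Tv o qm (o.act qp' a)).2 =
      o.act qp' a * (o.act qm (o.conj a))⁻¹ * (o.phi a)⁻¹ ∧
    Tv o qm (o.act qp' a) = Tv o qp' (o.act qm (-(o.conj a))) := by
  obtain ⟨hpp, hmm, hpm, hmp, hcp, hπp, hπm, hρp, hρm, hap, ham⟩ := hη
  obtain ⟨hpp', hmm', hpm', hmp', hcp', hπp', hπm', hρp', hρm', hap', ham'⟩ := hη'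
  -- basic facts
  have hconj0 : o.conj 0 = 0 := by
    have h := o.conj_add 0 0; simp only [add_zero] at h
    exact (left_eq_add.mp h)
  have hphi0 : o.phi 0 = 1 := by
    have h := o.phi_add 0 0; simp only [add_zero] at h
    exact (left_eq_mul.mp h)
  have hconjneg : ∀ x : R, o.conj (-x) = -o.conj x := by
    intro x
    have h := o.conj_add x (-x); simp only [add_neg_cancel, hconj0] at h
    exact eq_neg_of_add_eq_zero_right h.symm
  have hphineg : ∀ x : R, o.phi (-x) = (o.phi x)⁻¹ := by
    intro x
    have h := o.phi_add x (-x); simp only [add_neg_cancel, hphi0] at h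
    exact eq_inv_of_mul_eq_one_right h.symm
  have hactneg : ∀ (u : Δ) (c : R), o.rho u = 0 → o.act u (-c) = (o.act u c)⁻¹ := by
    intro u c hρ
    have h0 : o.act u 0 = 1 := by
      have h := o.act_addR u 0 0
      simp only [add_zero, hconj0, zero_mul, mul_zero, hphi0, mul_one] at h
      exact (left_eq_mul.mp h)
    have h := o.act_addR u c (-c)
    simp only [add_neg_cancel, hρ, mul_zero, zero_mul, hphi0, mul_one, h0] at h
    exact eq_inv_of_mul_eq_one_right h.symm
  -- element computations
  have haep : a * ep = a := by rw [ha]; rw [mul_assoc, mul_assoc, hpp, ← mul_assoc]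
  have hepa : ep' * a = a := by
    conv_lhs => rw [ha]
    rw [← mul_assoc, ← mul_assoc, hpp', ← ha]
  set s := o.conj a with hs
  have hsform : s = em * s * em' := by
    rw [hs]
    conv_lhs => rw [ha]
    rw [o.conj_mul, o.conj_mul, hcp, hcp', mul_assoc]
  have hems : em * s = s := by
    conv_lhs => rw [hsform]
    rw [← mul_assoc, ← mul_assoc, hmm, ← hsform]
  have hsem : s * em' = s := by
    conv_lhs => rw [hsform]
    rw [mul_assoc, mul_assoc, hmm', ← mul_assoc, ← hsform]
  have hemem' : em * em' = 0 := by
    have h := horth.1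
    have h2 : em * ((ep + em) * (ep' + em')) * em' = 0 := by rw [h]; simp
    have h3 : em * (ep + em) = em := by rw [mul_add, hmp, hmm, zero_add]
    have h4 : (ep' + em') * em' = em' := by rw [add_mul, hpm', hmm', zero_add]
    rw [← mul_assoc] at h2
    rw [h3] at h2
    rw [mul_assoc, h4] at h2
    exact h2
  have hem'em : em' * em = 0 := by
    have h := horth.2
    have h2 : em' * ((ep' + em') * (ep + em)) * em = 0 := by rw [h]; simp
    have h3 : em' * (ep' + em') = em' := by rw [mul_add, hmp', hmm', zero_add]
    have h4 : (ep + em) * em = em := by rw [add_mul, hpm, hmm, zero_add]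
    rw [← mul_assoc, h3, mul_assoc, h4] at h2
    exact h2
  have hss : s * s = 0 := by
    have h : s * s = s * em' * (em * s) := by rw [hsem, hems]
    rw [h, mul_assoc, ← mul_assoc em', hem'em, zero_mul, mul_zero]
  -- properties of u = act qp' a and v = act qm (-s)
  have hπu : o.pi (o.act qp' a) = a := by rw [o.pi_act, hπp', hepa]
  have hρu : o.rho (o.act qp' a) = 0 := by rw [o.rho_act, hρp', mul_zero, zero_mul]
  have hπv : o.pi (o.act qm (-s)) = -s := by
    rw [o.pi_act, hπm, mul_neg, hems]
  have hρv : o.rho (o.act qm (-s)) = 0 := by rw [o.rho_act, hρm, mul_zero, zero_mul]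
  have hvinv : o.act qm (-s) = (o.act qm s)⁻¹ := hactneg qm s hρm
  have hconjs : o.conj s = a := o.conj_conj a
  -- phi a = phi (-s)
  have hphias : o.phi a = o.phi (-s) := by
    have hsym : o.conj (a + s) = a + s := by
      rw [o.conj_add, hconjs, add_comm]
    have h1 : o.phi (a + s) = 1 := o.phi_symm _ hsym
    rw [o.phi_add] at h1
    rw [hphineg]
    exact eq_inv_of_mul_eq_one_left h1
  -- commutation
  have hcomm : o.act qp' a * o.act qm (-s) = o.act qm (-s) * o.act qp' a := by
    have h := o.comm_phi (o.act qp' a) (o.act qm (-s))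
    rw [hπu, hπv, mul_neg, neg_neg, hss, hphi0] at h
    exact commutatorElement_eq_one_iff_mul_comm.mp h
  refine ⟨?_, ?_, ?_⟩
  · simp only [Tv, hρu, hπu, zero_add]; rfl
  · simp only [Tv, hρu, hπu, zero_add, zero_sub, ← hs, hactneg qm s hρm]
  · have h2 : (Tv o qm (o.act qp' a)).2 = (Tv o qp' (o.act qm (-s))).2 := by
      simp only [Tv, hρu, hπu, hρv, hπv, zero_add, zero_sub, hconjneg, hconjs, neg_neg,
        ← hs]
      rw [hcomm, hphias]
    have h1 : (Tv o qm (o.act qp' a)).1 = (Tv o qp' (o.act qm (-s))).1 := by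
      simp only [Tv, hρu, hπu, hρv, hπv, zero_add, zero_sub, hconjneg, hconjs, neg_neg, ← hs]
      abel
    exact Prod.ext h1 h2
end
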